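/- For a partition λ with n = |λ|, define the polynomial φ_λ(z) := ∏_{i=1}^{n} (z + n + λ_i − i), where λ_i = 0 for i greater than the number of parts of λ. Then, as an identity of polynomials in the variable z, D( φ_λ(z)/H_λ ) = z · φ_λ(z+1)/H_λ; that is, Σ_{λ⁺} φ_{λ⁺}(z)/H_{λ⁺} − φ_λ(z)/H_λ = z·φ_λ(z+1)/H_λ, where λ⁺ ranges over all partitions obtained from λ by adding one box (and φ_{λ⁺} is formed with n replaced by n+1). -/

import Mathlib

open scoped Classical

namespace HookDiff

/-- The hook length of the box `c` in the Young diagram `μ`: the number of boxes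
directly to its right, directly below/above it in its column, plus the box itself. -/
def hook (μ : YoungDiagram) (c : ℕ × ℕ) : ℕ :=
  (μ.cells.filter (fun d => (d.1 = c.1 ∧ c.2 ≤ d.2) ∨ (d.2 = c.2 ∧ c.1 ≤ d.1))).card

/-- `H μ` is the product of all hook lengths of `μ`. -/
def H (μ : YoungDiagram) : ℚ := ∏ c ∈ μ.cells, (hook μ c : ℚ)

/-- The cells that can be added to `μ` to produce a Young diagram (inner corners). -/
noncomputable def addables (μ : YoungDiagram) : Finset (ℕ × ℕ) :=
  (Finset.range (μ.card + 1) ×ˢ Finset.range (μ.card + 1)).filter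
    (fun c => c ∉ μ ∧ IsLowerSet (↑(insert c μ.cells) : Set (ℕ × ℕ)))

/-- Add a box at cell `c` to `μ` (junk value `μ` if the result is not a diagram). -/
noncomputable def addBox (μ : YoungDiagram) (c : ℕ × ℕ) : YoungDiagram :=
  if h : IsLowerSet (↑(insert c μ.cells) : Set (ℕ × ℕ)) then ⟨insert c μ.cells, h⟩ else μ

/-- The cells that can be removed from `μ` leaving a Young diagram (outer corners). -/
noncomputable def removables (μ : YoungDiagram) : Finset (ℕ × ℕ) :=
  μ.cells.filter (fun c => IsLowerSet (↑(μ.cells.erase c) : Set (ℕ × ℕ)))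

/-- Remove the box at cell `c` from `μ` (junk value `μ` if the result is not a diagram). -/
noncomputable def removeBox (μ : YoungDiagram) (c : ℕ × ℕ) : YoungDiagram :=
  if h : IsLowerSet (↑(μ.cells.erase c) : Set (ℕ × ℕ)) then ⟨μ.cells.erase c, h⟩ else μ

/-- The difference operator `D`: `Dg(λ) = Σ_{λ⁺} g(λ⁺) − g(λ)`, where `λ⁺` runs over
all partitions obtained from `λ` by adding one box. -/
noncomputable def D (g : YoungDiagram → ℚ) : YoungDiagram → ℚ :=
  fun μ => (∑ c ∈ addables μ, g (addBox μ c)) - g μ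

/-- The difference operator `D⁻`: `D⁻g(λ) = |λ|·g(λ) − Σ_{λ⁻} g(λ⁻)`, where `λ⁻` runs
over all partitions obtained from `λ` by removing one box. -/
noncomputable def Dminus (g : YoungDiagram → ℚ) : YoungDiagram → ℚ :=
  fun μ => (μ.card : ℚ) * g μ - ∑ c ∈ removables μ, g (removeBox μ c)

/-- `fskew n μ λ` is the number of standard Young tableaux of skew shape `λ/μ`
(with `n = |λ| - |μ|`), i.e. the number of chains `μ = ν₀ ⊂ ν₁ ⊂ ⋯ ⊂ ν_n = λ`
in which each diagram is obtained from the previous one by adding a single box. -/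
noncomputable def fskew : ℕ → YoungDiagram → YoungDiagram → ℕ
  | 0, μ, l => if μ = l then 1 else 0
  | n + 1, μ, l => ∑ c ∈ addables μ, fskew n (addBox μ c) l

/-- `f_λ`, the number of standard Young tableaux of shape `λ`. -/
noncomputable def f (l : YoungDiagram) : ℕ := fskew l.card ⊥ l

/-- `S(λ, r) = Σ_{□∈λ} ∏_{j=1}^{r} (h_□² − j²)`. -/
def S (l : YoungDiagram) (r : ℕ) : ℚ :=
  ∑ c ∈ l.cells, ∏ j ∈ Finset.Icc 1 r, ((hook l c : ℚ) ^ 2 - (j : ℚ) ^ 2)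

/-- `K_r = (2r)!·(2r+1)! / (r!·(r+1)!²)`. -/
def K (r : ℕ) : ℚ :=
  ((2 * r).factorial : ℚ) * ((2 * r + 1).factorial : ℚ) /
    ((r.factorial : ℚ) * ((r + 1).factorial : ℚ) ^ 2)

/-- The content of the box `c = (i, j)` is `j - i`. -/
def content (c : ℕ × ℕ) : ℚ := (c.2 : ℚ) - (c.1 : ℚ)

/-- `C(λ, r) = Σ_{□∈λ} ∏_{j=0}^{r-1} (c_□² − j²)`. -/
def Ccont (l : YoungDiagram) (r : ℕ) : ℚ :=
  ∑ c ∈ l.cells, ∏ j ∈ Finset.range r, (content c ^ 2 - (j : ℚ) ^ 2)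


/-- `φ_λ(z) = ∏_{i=1}^{n} (z + n + λ_i − i)` with `n = |λ|`, evaluated at `z : ℚ`
(here `λ_i = rowLen (i-1)`, and `λ_i = 0` beyond the last part). -/
def phiEval (μ : YoungDiagram) (z : ℚ) : ℚ :=
  ∏ i ∈ Finset.range μ.card, (z + (μ.card : ℚ) + (μ.rowLen i : ℚ) - (i : ℚ) - 1)



section AlgPart
open Polynomial

/-- The coefficient `e_k = (b_k+1)⁻¹ ∏_{j≠k} (b_j - b_k - 1)/(b_j - b_k)`. -/
noncomputable def e (m : ℕ) (b : ℕ → ℚ) (k : ℕ) : ℚ :=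
  (b k + 1)⁻¹ * ∏ j ∈ (Finset.range m).erase k, ((b j - b k - 1) * (b j - b k)⁻¹)

lemma alg_main (m : ℕ) (hm : 0 < m) (b : ℕ → ℚ)
    (hanti : ∀ {i j}, i < j → j < m → b j < b i) (hlast : b (m - 1) = 0) (z : ℚ) :
    ∑ k ∈ Finset.range m, e m b k * ((z + b k + 1) * ∏ j ∈ (Finset.range m).erase k, (z + b j))
      = ∏ i ∈ Finset.range (m - 1), (z - 1 + b i) + ∏ i ∈ Finset.range m, (z + b i) := by
  classical
  obtain ⟨n, rfl⟩ : ∃ n, m = n + 1 := ⟨m - 1, (Nat.succ_pred_eq_of_pos hm).symm⟩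
  simp only [Nat.add_sub_cancel] at hlast ⊢
  have hb0 : ∀ i, i < n + 1 → 0 ≤ b i := by
    intro i hi
    rcases eq_or_lt_of_le (Nat.lt_succ_iff.mp hi) with h | h
    · rw [h, hlast]
    · exact le_of_lt (hlast ▸ hanti h (by omega))
  set s : Finset ℕ := Finset.range (n + 2) with hs
  set v : ℕ → ℚ := fun k => if k = n + 1 then 1 else -(b k) with hv
  have hvtop : v (n + 1) = 1 := by simp only [hv]; simp
  have hvval : ∀ j, j ≠ n + 1 → v j = -(b j) := by
    intro j hj; simp only [hv]; simp [hj]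
  have hvinj : Set.InjOn v ↑s := by
    intro i hi j hj hij
    simp only [hs, Finset.coe_range, Set.mem_Iio] at hi hj
    by_cases him : i = n + 1 <;> by_cases hjm : j = n + 1
    · omega
    · exfalso; rw [him, hvtop, hvval j hjm] at hij
      have := hb0 j (by omega); linarith
    · exfalso; rw [hjm, hvtop, hvval i him] at hij
      have := hb0 i (by omega); linarith
    · rw [hvval i him, hvval j hjm, neg_inj] at hij
      by_contra hne
      rcases Nat.lt_or_ge i j with h | h
      · exact absurd hij (ne_of_gt (hanti h (by omega)))
      · exact absurd hij.symm (ne_of_gt (hanti (by omega) (by omega)))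
  set Q : Polynomial ℚ := ∏ i ∈ Finset.range (n + 1), (X + C (b i - 1)) with hQ
  have hmonQ : Q.Monic := monic_prod_of_monic _ _ fun i _ => monic_X_add_C _
  have hQdeg : Q.natDegree = n + 1 := by
    rw [hQ, natDegree_prod _ _ fun i _ => (monic_X_add_C _).ne_zero]
    simp only [natDegree_X_add_C, Finset.sum_const, smul_eq_mul, mul_one, Finset.card_range]
  have hQlt : Q.degree < (s.card : ℕ) := by
    rw [degree_eq_natDegree hmonQ.ne_zero, hQdeg, hs, Finset.card_range]
    exact_mod_cast Nat.lt_succ_self _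
  have hQI := Lagrange.eq_interpolate hvinj hQlt
  -- evaluation of the interpolation identity at an arbitrary point
  have hev : ∀ w : ℚ, Q.eval w
      = ∑ k ∈ s, Q.eval (v k) * ∏ j ∈ s.erase k, ((v k - v j)⁻¹ * (w - v j)) := by
    intro w
    conv_lhs => rw [hQI]
    rw [Lagrange.interpolate_apply, eval_finset_sum]
    refine Finset.sum_congr rfl fun k hk => ?_
    rw [eval_mul, eval_C]
    congr 1
    rw [Lagrange.basis, eval_prod]
    refine Finset.prod_congr rfl fun j hj => ?_
    simp only [Lagrange.basisDivisor, eval_mul, eval_sub, eval_C, eval_X]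
  -- the key pointwise identity
  have hkey : ∀ w : ℚ, Q.eval w
      = (w - 1) * ∑ k ∈ Finset.range (n + 1),
          e (n + 1) b k * ∏ j ∈ (Finset.range (n + 1)).erase k, (w + b j) := by
    intro w
    rw [hev w]
    have hsplit : s = insert (n + 1) (Finset.range (n + 1)) := by
      rw [hs, Finset.range_add_one]
    rw [hsplit, Finset.sum_insert (by simp)]
    have hQ1 : Q.eval (v (n + 1)) = 0 := by
      rw [hvtop, hQ, eval_prod]
      refine Finset.prod_eq_zero (Finset.self_mem_range_succ n) ?_
      simp [hlast]
    rw [hQ1, zero_mul, zero_add, Finset.mul_sum]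
    refine Finset.sum_congr rfl fun k hk => ?_
    have hkn : k ≠ n + 1 := by simp at hk; omega
    have herase : (insert (n + 1) (Finset.range (n + 1))).erase k
        = insert (n + 1) ((Finset.range (n + 1)).erase k) :=
      Finset.erase_insert_of_ne hkn.symm
    rw [herase, Finset.prod_insert (by simp)]
    have hvk : v k = -(b k) := hvval k hkn
    have hQk : Q.eval (v k) = -∏ j ∈ (Finset.range (n + 1)).erase k, (b j - b k - 1) := by
      rw [hvk, hQ, eval_prod,
        ← Finset.mul_prod_erase _ (fun i => eval (-(b k)) (X + C (b i - 1))) hk]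
      have h2 : eval (-(b k)) (X + C (b k - 1)) = -1 := by
        simp only [eval_add, eval_X, eval_C]; ring
      have h1 : ∀ j ∈ (Finset.range (n + 1)).erase k,
          eval (-(b k)) (X + C (b j - 1)) = b j - b k - 1 := by
        intro j _; simp only [eval_add, eval_X, eval_C]; ring
      rw [h2, Finset.prod_congr rfl h1]; ring
    have hvj : ∀ j ∈ (Finset.range (n + 1)).erase k, (v k - v j)⁻¹ * (w - v j)
        = (b j - b k)⁻¹ * (w + b j) := by
      intro j hj
      have hj' : j ≠ n + 1 := by
        have := Finset.mem_range.mp (Finset.mem_of_mem_erase hj); omega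
      rw [hvk, hvval j hj']
      rw [show -(b k) - -(b j) = b j - b k by ring, show w - -(b j) = w + b j by ring]
    rw [Finset.prod_congr rfl hvj, hQk, hvk, hvtop]
    rw [Finset.prod_mul_distrib]
    simp only [e]
    rw [Finset.prod_mul_distrib]
    have hinv : (-(b k) - 1)⁻¹ = -((b k + 1)⁻¹) := by
      rw [show -(b k) - 1 = -(b k + 1) by ring, inv_neg]
    rw [hinv]
    ring
  -- polynomial versions
  set P : Polynomial ℚ := ∑ k ∈ Finset.range (n + 1),
      C (e (n + 1) b k) * ∏ j ∈ (Finset.range (n + 1)).erase k, (X + C (b j)) with hP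
  set Φ : Polynomial ℚ := ∏ i ∈ Finset.range n, (X + C (b i - 1)) with hΦ
  have hPeval : ∀ w : ℚ, P.eval w = ∑ k ∈ Finset.range (n + 1),
      e (n + 1) b k * ∏ j ∈ (Finset.range (n + 1)).erase k, (w + b j) := by
    intro w
    rw [hP, eval_finset_sum]
    refine Finset.sum_congr rfl fun k _ => ?_
    rw [eval_mul, eval_C, eval_prod]
    congr 1
    exact Finset.prod_congr rfl fun j _ => by simp only [eval_add, eval_X, eval_C]
  have hΦeval : ∀ w : ℚ, Φ.eval w = ∏ i ∈ Finset.range n, (w + (b i - 1)) := by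
    intro w; rw [hΦ, eval_prod]
    exact Finset.prod_congr rfl fun i _ => by simp only [eval_add, eval_X, eval_C]
  have hQΦ : ∀ w : ℚ, Q.eval w = (w - 1) * Φ.eval w := by
    intro w
    have h1 : Q = Φ * (X + C (b n - 1)) := by rw [hQ, hΦ, Finset.prod_range_succ]
    rw [h1, eval_mul, eval_add, eval_X, eval_C, hlast]
    ring
  have hPΦ : P = Φ := by
    have h1 : (X - C 1) * P = (X - C 1) * Φ := by
      apply Polynomial.funext
      intro w
      rw [eval_mul, eval_mul, eval_sub, eval_X, eval_C, hPeval, ← hkey w, hQΦ]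
    exact mul_left_cancel₀ (X_sub_C_ne_zero 1) h1
  -- sum of coefficients e is 1
  have hsum1 : ∑ k ∈ Finset.range (n + 1), e (n + 1) b k = 1 := by
    have hco : P.coeff n = ∑ k ∈ Finset.range (n + 1), e (n + 1) b k := by
      rw [hP, finset_sum_coeff]
      refine Finset.sum_congr rfl fun k hk => ?_
      rw [coeff_C_mul]
      have hmon : (∏ j ∈ (Finset.range (n + 1)).erase k, (X + C (b j))).Monic :=
        monic_prod_of_monic _ _ fun j _ => monic_X_add_C _
      have hdeg : (∏ j ∈ (Finset.range (n + 1)).erase k, (X + C (b j))).natDegree = n := by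
        rw [natDegree_prod _ _ fun j _ => (monic_X_add_C _).ne_zero]
        simp only [natDegree_X_add_C, Finset.sum_const, smul_eq_mul, mul_one,
          Finset.card_erase_of_mem hk, Finset.card_range, Nat.add_sub_cancel]
      have := hmon.coeff_natDegree
      rw [hdeg] at this
      rw [this, mul_one]
    have hΦco : Φ.coeff n = 1 := by
      have hmon : Φ.Monic := monic_prod_of_monic _ _ fun i _ => monic_X_add_C _
      have hdeg : Φ.natDegree = n := by
        rw [hΦ, natDegree_prod _ _ fun i _ => (monic_X_add_C _).ne_zero]
        simp only [natDegree_X_add_C, Finset.sum_const, smul_eq_mul, mul_one, Finset.card_range]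
      have := hmon.coeff_natDegree
      rw [hdeg] at this
      exact this
    rw [← hco, hPΦ, hΦco]
  -- final computation
  have hexp : ∀ k ∈ Finset.range (n + 1),
      e (n + 1) b k * ((z + b k + 1) * ∏ j ∈ (Finset.range (n + 1)).erase k, (z + b j))
      = e (n + 1) b k * ∏ j ∈ Finset.range (n + 1), (z + b j)
        + e (n + 1) b k * ∏ j ∈ (Finset.range (n + 1)).erase k, (z + b j) := by
    intro k hk
    rw [← Finset.prod_erase_mul _ _ hk]
    ring
  rw [Finset.sum_congr rfl hexp, Finset.sum_add_distrib, ← Finset.sum_mul, hsum1, one_mul]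
  have h2 := hPeval z
  rw [hPΦ, hΦeval] at h2
  rw [← h2]
  have h3 : ∏ i ∈ Finset.range n, (z + (b i - 1)) = ∏ i ∈ Finset.range n, (z - 1 + b i) :=
    Finset.prod_congr rfl fun i _ => by ring
  rw [h3]
  ring

end AlgPart

-- basic lemmas
lemma rowLen_le_card (μ : YoungDiagram) (i : ℕ) : μ.rowLen i ≤ μ.card := by
  rw [μ.rowLen_eq_card]
  exact Finset.card_le_card (fun c hc => (YoungDiagram.mem_cells _).mpr (YoungDiagram.mem_row_iff.mp hc).1)

lemma colLen_le_card (μ : YoungDiagram) (j : ℕ) : μ.colLen j ≤ μ.card := by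
  rw [μ.colLen_eq_card]
  exact Finset.card_le_card (fun c hc => (YoungDiagram.mem_cells _).mpr (YoungDiagram.mem_col_iff.mp hc).1)

lemma row_filter_eq (μ : YoungDiagram) (i j : ℕ) :
    μ.cells.filter (fun d => d.1 = i ∧ j ≤ d.2) = {i} ×ˢ Finset.Ico j (μ.rowLen i) := by
  ext d
  simp only [Finset.mem_filter, Finset.mem_product, Finset.mem_singleton, Finset.mem_Ico,
    YoungDiagram.mem_cells]
  constructor
  · rintro ⟨hd, rfl, hj⟩
    refine ⟨rfl, hj, ?_⟩
    have := YoungDiagram.mem_iff_lt_rowLen.mp (show (d.1, d.2) ∈ μ by simpa using hd)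
    exact this
  · rintro ⟨h1, hj, hlt⟩
    refine ⟨?_, h1, hj⟩
    have : (d.1, d.2) ∈ μ := YoungDiagram.mem_iff_lt_rowLen.mpr (h1 ▸ hlt)
    simpa using this

lemma col_filter_eq (μ : YoungDiagram) (i j : ℕ) :
    μ.cells.filter (fun d => d.2 = j ∧ i ≤ d.1) = Finset.Ico i (μ.colLen j) ×ˢ {j} := by
  ext d
  simp only [Finset.mem_filter, Finset.mem_product, Finset.mem_singleton, Finset.mem_Ico,
    YoungDiagram.mem_cells]
  constructor
  · rintro ⟨hd, rfl, hi⟩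
    refine ⟨⟨hi, ?_⟩, rfl⟩
    have := YoungDiagram.mem_iff_lt_colLen.mp (show (d.1, d.2) ∈ μ by simpa using hd)
    exact this
  · rintro ⟨⟨hi, hlt⟩, h2⟩
    refine ⟨?_, h2, hi⟩
    have : (d.1, d.2) ∈ μ := YoungDiagram.mem_iff_lt_colLen.mpr (h2 ▸ hlt)
    simpa using this

lemma hook_eq (μ : YoungDiagram) {i j : ℕ} (h : (i, j) ∈ μ) :
    hook μ (i, j) + 1 = (μ.rowLen i - j) + (μ.colLen j - i) := by
  have hfil : (μ.cells.filter (fun d => (d.1 = i ∧ j ≤ d.2) ∨ (d.2 = j ∧ i ≤ d.1)))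
      = μ.cells.filter (fun d => d.1 = i ∧ j ≤ d.2) ∪
        μ.cells.filter (fun d => d.2 = j ∧ i ≤ d.1) := Finset.filter_or _ _ _
  have hint : (μ.cells.filter (fun d => d.1 = i ∧ j ≤ d.2)) ∩
      (μ.cells.filter (fun d => d.2 = j ∧ i ≤ d.1)) = {(i, j)} := by
    ext d
    simp only [Finset.mem_inter, Finset.mem_filter, Finset.mem_singleton,
      YoungDiagram.mem_cells]
    constructor
    · rintro ⟨⟨-, h1, h2⟩, -, h3, -⟩
      exact Prod.ext h1 h3
    · rintro rfl
      simp [h]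
  have hcard := Finset.card_union_add_card_inter
    (μ.cells.filter (fun d => d.1 = i ∧ j ≤ d.2))
    (μ.cells.filter (fun d => d.2 = j ∧ i ≤ d.1))
  rw [hint, Finset.card_singleton] at hcard
  have h1 : (μ.cells.filter (fun d => d.1 = i ∧ j ≤ d.2)).card = μ.rowLen i - j := by
    rw [row_filter_eq]
    simp [Nat.card_Ico]
  have h2 : (μ.cells.filter (fun d => d.2 = j ∧ i ≤ d.1)).card = μ.colLen j - i := by
    rw [col_filter_eq]
    simp [Nat.card_Ico]
  rw [h1, h2] at hcard
  rw [hook, hfil]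
  omega

lemma hook_pos (μ : YoungDiagram) {c : ℕ × ℕ} (h : c ∈ μ) : 0 < hook μ c := by
  rw [hook]
  refine Finset.card_pos.mpr ⟨c, ?_⟩
  simp only [Finset.mem_filter, YoungDiagram.mem_cells]
  simp [h]

-- determination of rowLen / colLen
lemma rowLen_eq_of (μ : YoungDiagram) {i r : ℕ} (h1 : (i, r) ∉ μ)
    (h2 : ∀ j < r, (i, j) ∈ μ) : μ.rowLen i = r := by
  have ha : μ.rowLen i ≤ r := by
    by_contra hc
    exact h1 (YoungDiagram.mem_iff_lt_rowLen.mpr (by omega))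
  rcases Nat.eq_zero_or_pos r with hr | hr
  · omega
  · have := YoungDiagram.mem_iff_lt_rowLen.mp (h2 (r - 1) (by omega))
    omega

lemma colLen_eq_of (μ : YoungDiagram) {j r : ℕ} (h1 : (r, j) ∉ μ)
    (h2 : ∀ i < r, (i, j) ∈ μ) : μ.colLen j = r := by
  have ha : μ.colLen j ≤ r := by
    by_contra hc
    exact h1 (YoungDiagram.mem_iff_lt_colLen.mpr (by omega))
  rcases Nat.eq_zero_or_pos r with hr | hr
  · omega
  · have := YoungDiagram.mem_iff_lt_colLen.mp (h2 (r - 1) (by omega))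
    omega

/-- The addability predicate for a row index. -/
def Addable (μ : YoungDiagram) (k : ℕ) : Prop := k = 0 ∨ μ.rowLen k < μ.rowLen (k - 1)

lemma addable_lowerSet {μ : YoungDiagram} {k : ℕ} (hk : Addable μ k) :
    IsLowerSet (↑(insert ((k, μ.rowLen k) : ℕ × ℕ) μ.cells) : Set (ℕ × ℕ)) := by
  intro x y hyx hx
  simp only [Finset.coe_insert, Set.mem_insert_iff, Finset.mem_coe,
    YoungDiagram.mem_cells] at hx ⊢
  obtain ⟨h1, h2⟩ : y.1 ≤ x.1 ∧ y.2 ≤ x.2 := ⟨hyx.1, hyx.2⟩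
  rcases hx with hx | hx
  · -- x is the new corner
    rcases Nat.lt_or_ge y.2 (μ.rowLen k) with hy2 | hy2
    · right
      have : (k, y.2) ∈ μ := YoungDiagram.mem_iff_lt_rowLen.mpr hy2
      have := μ.up_left_mem (show y.1 ≤ k by rw [hx] at h1; exact h1) (le_refl y.2) this
      simpa using this
    · -- y.2 = rowLen k, since y.2 ≤ x.2 = rowLen k
      have hx2 : x.2 = μ.rowLen k := by rw [hx]
      have hy2' : y.2 = μ.rowLen k := by omega
      rcases Nat.lt_or_ge y.1 x.1 with hy1 | hy1
      · right
        have hk0 : k ≠ 0 := by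
          intro h0
          rw [hx, h0] at hy1; omega
        rcases hk with h | h
        · exact absurd h hk0
        · have hy1k : y.1 ≤ k - 1 := by rw [hx] at hy1; omega
          have : (y.1, y.2) ∈ μ := by
            rw [YoungDiagram.mem_iff_lt_rowLen]
            calc y.2 = μ.rowLen k := hy2'
            _ < μ.rowLen (k - 1) := h
            _ ≤ μ.rowLen y.1 := μ.rowLen_anti _ _ hy1k
          simpa using this
      · left
        have : y.1 = x.1 := by omega
        have h2' : y = x := Prod.ext this (by omega)
        rw [h2', hx]
  · right
    have : (y.1, y.2) ∈ μ := μ.up_left_mem h1 h2 (by simpa using hx)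
    simpa using this

lemma addable_not_mem {μ : YoungDiagram} (k : ℕ) : ((k, μ.rowLen k) : ℕ × ℕ) ∉ μ := by
  rw [YoungDiagram.mem_iff_lt_rowLen]; omega

lemma addable_le_card {μ : YoungDiagram} {k : ℕ} (hk : Addable μ k) : k ≤ μ.card := by
  rcases hk with h | h
  · omega
  · have hk0 : 0 < μ.rowLen (k - 1) := by omega
    have : (k - 1, 0) ∈ μ := YoungDiagram.mem_iff_lt_rowLen.mpr hk0
    have h2 := YoungDiagram.mem_iff_lt_colLen.mp this
    have h3 := colLen_le_card μ 0
    omega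

lemma mem_addables_iff {μ : YoungDiagram} {c : ℕ × ℕ} :
    c ∈ addables μ ↔ c.2 = μ.rowLen c.1 ∧ Addable μ c.1 := by
  constructor
  · intro hc
    simp only [addables, Finset.mem_filter, Finset.mem_product, Finset.mem_range] at hc
    obtain ⟨⟨hc1, hc2⟩, hnm, hls⟩ := hc
    -- first: c.2 = rowLen c.1
    have hge : μ.rowLen c.1 ≤ c.2 := by
      by_contra h
      exact hnm (YoungDiagram.mem_iff_lt_rowLen.mpr (by omega))
    have hle : c.2 ≤ μ.rowLen c.1 := by
      by_contra h
      push_neg at h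
      have hmem : ((c.1, μ.rowLen c.1) : ℕ × ℕ) ∈ (↑(insert c μ.cells) : Set (ℕ × ℕ)) :=
        hls (show ((c.1, μ.rowLen c.1) : ℕ × ℕ) ≤ c from ⟨le_refl _, le_of_lt h⟩) (by simp)
      simp only [Finset.coe_insert, Set.mem_insert_iff, Finset.mem_coe,
        YoungDiagram.mem_cells] at hmem
      rcases hmem with hm | hm
      · have : c.2 = μ.rowLen c.1 := by
          have := congrArg Prod.snd hm; simpa using this.symm
        omega
      · exact absurd hm (addable_not_mem c.1)
    have he : c.2 = μ.rowLen c.1 := le_antisymm hle hge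
    refine ⟨he, ?_⟩
    rcases Nat.eq_zero_or_pos c.1 with h0 | h0
    · exact Or.inl h0
    · right
      have hmem : ((c.1 - 1, c.2) : ℕ × ℕ) ∈ (↑(insert c μ.cells) : Set (ℕ × ℕ)) :=
        hls (show ((c.1 - 1, c.2) : ℕ × ℕ) ≤ c from ⟨by omega, le_refl _⟩) (by simp)
      simp only [Finset.coe_insert, Set.mem_insert_iff, Finset.mem_coe,
        YoungDiagram.mem_cells] at hmem
      rcases hmem with hm | hm
      · exfalso
        have := congrArg Prod.fst hm; simp at this; omega
      · have := YoungDiagram.mem_iff_lt_rowLen.mp hm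
        omega
  · rintro ⟨he, hadd⟩
    have hc : c = (c.1, μ.rowLen c.1) := Prod.ext rfl he
    simp only [addables, Finset.mem_filter, Finset.mem_product, Finset.mem_range]
    refine ⟨⟨?_, ?_⟩, ?_, ?_⟩
    · have := addable_le_card hadd; omega
    · have := rowLen_le_card μ c.1; omega
    · rw [hc]; exact addable_not_mem c.1
    · rw [hc]; exact addable_lowerSet hadd

lemma addables_eq (μ : YoungDiagram) :
    addables μ = ((Finset.range (μ.card + 1)).filter (fun k => Addable μ k)).image
      (fun k => ((k, μ.rowLen k) : ℕ × ℕ)) := by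
  ext c
  rw [mem_addables_iff]
  simp only [Finset.mem_image, Finset.mem_filter, Finset.mem_range]
  constructor
  · rintro ⟨he, hadd⟩
    exact ⟨c.1, ⟨(by have := addable_le_card hadd; omega), hadd⟩, (Prod.ext rfl he.symm)⟩
  · rintro ⟨k, ⟨hk, hadd⟩, rfl⟩
    exact ⟨rfl, hadd⟩

-- addBox facts
lemma addBox_cells {μ : YoungDiagram} {k : ℕ} (hk : Addable μ k) :
    (addBox μ (k, μ.rowLen k)).cells = insert ((k, μ.rowLen k) : ℕ × ℕ) μ.cells := by
  rw [addBox, dif_pos (addable_lowerSet hk)]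

lemma mem_addBox_iff {μ : YoungDiagram} {k : ℕ} (hk : Addable μ k) {x : ℕ × ℕ} :
    x ∈ addBox μ (k, μ.rowLen k) ↔ x = (k, μ.rowLen k) ∨ x ∈ μ := by
  rw [← YoungDiagram.mem_cells, addBox_cells hk, Finset.mem_insert, YoungDiagram.mem_cells]

lemma addBox_card {μ : YoungDiagram} {k : ℕ} (hk : Addable μ k) :
    (addBox μ (k, μ.rowLen k)).card = μ.card + 1 := by
  show (addBox μ (k, μ.rowLen k)).cells.card = μ.cells.card + 1
  rw [addBox_cells hk, Finset.card_insert_of_notMem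
    (by rw [YoungDiagram.mem_cells]; exact addable_not_mem k)]

lemma addBox_rowLen {μ : YoungDiagram} {k : ℕ} (hk : Addable μ k) (i : ℕ) :
    (addBox μ (k, μ.rowLen k)).rowLen i
      = if i = k then μ.rowLen k + 1 else μ.rowLen i := by
  split_ifs with h
  · subst h
    apply rowLen_eq_of
    · rw [mem_addBox_iff hk]
      push_neg
      constructor
      · intro hc; have := congrArg Prod.snd hc; simp at this
      · rw [YoungDiagram.mem_iff_lt_rowLen]; omega
    · intro j hj
      rw [mem_addBox_iff hk]
      rcases Nat.lt_or_ge j (μ.rowLen i) with h | h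
      · exact Or.inr (YoungDiagram.mem_iff_lt_rowLen.mpr h)
      · left; have : j = μ.rowLen i := by omega
        rw [this]
  · apply rowLen_eq_of
    · rw [mem_addBox_iff hk]
      push_neg
      refine ⟨?_, ?_⟩
      · intro hc; have := congrArg Prod.fst hc; simp at this; omega
      · rw [YoungDiagram.mem_iff_lt_rowLen]; omega
    · intro j hj
      rw [mem_addBox_iff hk]
      exact Or.inr (YoungDiagram.mem_iff_lt_rowLen.mpr hj)

lemma corner_colLen {μ : YoungDiagram} {k : ℕ} (hk : Addable μ k) :
    μ.colLen (μ.rowLen k) = k := by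
  apply colLen_eq_of
  · exact addable_not_mem k
  · intro i hi
    rw [YoungDiagram.mem_iff_lt_rowLen]
    rcases hk with h | h
    · omega
    · calc μ.rowLen k < μ.rowLen (k - 1) := h
      _ ≤ μ.rowLen i := μ.rowLen_anti _ _ (by omega)

lemma addBox_colLen {μ : YoungDiagram} {k : ℕ} (hk : Addable μ k) (j : ℕ) :
    (addBox μ (k, μ.rowLen k)).colLen j
      = if j = μ.rowLen k then μ.colLen j + 1 else μ.colLen j := by
  split_ifs with h
  · subst h
    rw [corner_colLen hk]
    apply colLen_eq_of
    · rw [mem_addBox_iff hk]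
      push_neg
      constructor
      · intro hc; have := congrArg Prod.fst hc; simp at this
      · rw [YoungDiagram.mem_iff_lt_colLen, corner_colLen hk]; omega
    · intro i hi
      rw [mem_addBox_iff hk]
      rcases Nat.lt_or_ge i k with h | h
      · exact Or.inr (YoungDiagram.mem_iff_lt_colLen.mpr (by rw [corner_colLen hk]; omega))
      · left; have : i = k := by omega
        rw [this]
  · apply colLen_eq_of
    · rw [mem_addBox_iff hk]
      push_neg
      refine ⟨?_, ?_⟩
      · intro hc; have := congrArg Prod.snd hc; simp at this; omega
      · rw [YoungDiagram.mem_iff_lt_colLen]; omega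
    · intro i hi
      rw [mem_addBox_iff hk]
      exact Or.inr (YoungDiagram.mem_iff_lt_colLen.mpr hi)

/-- The β-numbers `a_i = λ_i + (n - i)` (0-indexed, with `n = |μ|`). -/
def aa (μ : YoungDiagram) (i : ℕ) : ℕ := μ.rowLen i + (μ.card - i)

lemma aa_anti (μ : YoungDiagram) {i j : ℕ} (hij : i < j) (hj : j ≤ μ.card) :
    aa μ j < aa μ i := by
  have := μ.rowLen_anti i j (le_of_lt hij)
  unfold aa
  omega

lemma rowLen_card_eq_zero (μ : YoungDiagram) : μ.rowLen μ.card = 0 := by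
  by_contra h
  have : (μ.card, 0) ∈ μ := YoungDiagram.mem_iff_lt_rowLen.mpr (by omega)
  have h2 := YoungDiagram.mem_iff_lt_colLen.mp this
  have h3 := colLen_le_card μ 0
  omega

lemma aa_last (μ : YoungDiagram) : aa μ μ.card = 0 := by
  unfold aa
  rw [rowLen_card_eq_zero]
  omega

lemma row_hook_val (μ : YoungDiagram) {k j : ℕ} (hj : j < μ.rowLen k) :
    hook μ (k, j) + 1 = (μ.rowLen k - j) + (μ.colLen j - k) :=
  hook_eq μ (YoungDiagram.mem_iff_lt_rowLen.mpr hj)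

lemma col_hook_val {μ : YoungDiagram} {k i : ℕ} (hk : Addable μ k) (hkn : k ≤ μ.card)
    (hik : i < k) : hook μ (i, μ.rowLen k) + 1 + aa μ k = aa μ i := by
  have hk0 : k ≠ 0 := by omega
  have hlt : μ.rowLen k < μ.rowLen i := by
    rcases hk with h | h
    · omega
    · exact lt_of_lt_of_le h (μ.rowLen_anti _ _ (by omega))
  have hmem : (i, μ.rowLen k) ∈ μ := YoungDiagram.mem_iff_lt_rowLen.mpr hlt
  have he := hook_eq μ hmem
  rw [corner_colLen hk] at he
  unfold aa
  omega

/-- Key bijection: hooks of row `k`, together with differences `a_k - a_i` for `i > k`,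
tile the interval `[1, a_k]`. -/
lemma row_hook_prod (μ : YoungDiagram) {k : ℕ} (hk : k ≤ μ.card) (f : ℕ → ℚ) :
    (∏ j ∈ Finset.range (μ.rowLen k), f (hook μ (k, j)))
      * (∏ i ∈ Finset.Ico (k + 1) (μ.card + 1), f (aa μ k - aa μ i))
      = ∏ x ∈ Finset.Icc 1 (aa μ k), f x := by
  classical
  set n := μ.card with hn
  set L := μ.rowLen k with hL
  -- hook monotonicity in j
  have hookmono : ∀ {p q : ℕ}, p < q → q < L → hook μ (k, q) < hook μ (k, p) := by
    intro p q hpq hq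
    have e1 := row_hook_val μ (show p < L by omega)
    have e2 := row_hook_val μ hq
    have e3 := μ.colLen_anti p q (le_of_lt hpq)
    have e4 : k < μ.colLen q := YoungDiagram.mem_iff_lt_colLen.mp
      (YoungDiagram.mem_iff_lt_rowLen.mpr (show q < μ.rowLen k from hq))
    omega
  have hinj1 : Set.InjOn (fun j => hook μ (k, j)) ↑(Finset.range L) := by
    intro p hp q hq he
    simp only [Finset.coe_range, Set.mem_Iio] at hp hq
    rcases lt_trichotomy p q with h | h | h
    · exact absurd he (by have := hookmono h hq; simp; omega)
    · exact h
    · exact absurd he (by have := hookmono h hp; simp; omega)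
  have hinj2 : Set.InjOn (fun i => aa μ k - aa μ i) ↑(Finset.Ico (k + 1) (n + 1)) := by
    intro p hp q hq he
    simp only [Finset.coe_Ico, Set.mem_Ico] at hp hq
    have hpk := aa_anti μ (show k < p by omega) (by omega)
    have hqk := aa_anti μ (show k < q by omega) (by omega)
    simp only at he
    rcases lt_trichotomy p q with h | h | h
    · have := aa_anti μ h (by omega); omega
    · exact h
    · have := aa_anti μ h (by omega); omega
  set T1 := (Finset.range L).image (fun j => hook μ (k, j)) with hT1
  set T2 := (Finset.Ico (k + 1) (n + 1)).image (fun i => aa μ k - aa μ i) with hT2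
  have hsub1 : T1 ⊆ Finset.Icc 1 (aa μ k) := by
    intro x hx
    rw [hT1, Finset.mem_image] at hx
    obtain ⟨j, hj, rfl⟩ := hx
    rw [Finset.mem_range] at hj
    have e1 := row_hook_val μ (show j < μ.rowLen k from hj)
    have e2 : k < μ.colLen j := YoungDiagram.mem_iff_lt_colLen.mp
      (YoungDiagram.mem_iff_lt_rowLen.mpr (show j < μ.rowLen k from hj))
    have e3 := colLen_le_card μ j
    rw [Finset.mem_Icc]
    unfold aa
    omega
  have hsub2 : T2 ⊆ Finset.Icc 1 (aa μ k) := by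
    intro x hx
    rw [hT2, Finset.mem_image] at hx
    obtain ⟨i, hi, rfl⟩ := hx
    rw [Finset.mem_Ico] at hi
    have := aa_anti μ (show k < i by omega) (by omega)
    rw [Finset.mem_Icc]
    omega
  have hdisj : Disjoint T1 T2 := by
    rw [Finset.disjoint_left]
    intro x hx1 hx2
    rw [hT1, Finset.mem_image] at hx1
    rw [hT2, Finset.mem_image] at hx2
    obtain ⟨j, hj, hjx⟩ := hx1
    obtain ⟨i, hi, hix⟩ := hx2
    rw [Finset.mem_range] at hj
    rw [Finset.mem_Ico] at hi
    have e1 := row_hook_val μ (show j < μ.rowLen k from hj)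
    have e2 : k < μ.colLen j := YoungDiagram.mem_iff_lt_colLen.mp
      (YoungDiagram.mem_iff_lt_rowLen.mpr (show j < μ.rowLen k from hj))
    have e3 := colLen_le_card μ j
    have e4 : j < μ.rowLen i ↔ i < μ.colLen j := by
      rw [← YoungDiagram.mem_iff_lt_rowLen, ← YoungDiagram.mem_iff_lt_colLen]
    have e5 := aa_anti μ (show k < i by omega) (by omega)
    have e6 : aa μ i = μ.rowLen i + (n - i) := rfl
    have e7 : aa μ k = μ.rowLen k + (n - k) := rfl
    omega
  have hcard1 : T1.card = L := by
    rw [hT1, Finset.card_image_of_injOn hinj1, Finset.card_range]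
  have hcard2 : T2.card = n - k := by
    rw [hT2, Finset.card_image_of_injOn hinj2, Nat.card_Ico]
    omega
  have hunion : T1 ∪ T2 = Finset.Icc 1 (aa μ k) := by
    apply Finset.eq_of_subset_of_card_le (Finset.union_subset hsub1 hsub2)
    rw [Finset.card_union_of_disjoint hdisj, hcard1, hcard2, Nat.card_Icc]
    have : aa μ k = L + (n - k) := rfl
    omega
  rw [← hunion, Finset.prod_union hdisj, hT1, hT2,
    Finset.prod_image hinj1, Finset.prod_image hinj2]

/-- Telescoping: `∏_{x=1}^{N} (x+1) = (N+1) ∏_{x=1}^{N} x` in `ℚ`. -/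
lemma icc_shift (N : ℕ) :
    (∏ x ∈ Finset.Icc 1 N, ((x : ℚ) + 1)) = ((N : ℚ) + 1) * ∏ x ∈ Finset.Icc 1 N, (x : ℚ) := by
  induction N with
  | zero => simp
  | succ N ih =>
    rw [Finset.prod_Icc_succ_top (by omega), Finset.prod_Icc_succ_top (by omega), ih]
    push_cast
    ring

-- hooks of the augmented diagram
lemma hook_addBox_corner {μ : YoungDiagram} {k : ℕ} (hk : Addable μ k) :
    hook (addBox μ (k, μ.rowLen k)) (k, μ.rowLen k) = 1 := by
  have hmem : ((k, μ.rowLen k) : ℕ × ℕ) ∈ addBox μ (k, μ.rowLen k) :=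
    (mem_addBox_iff hk).mpr (Or.inl rfl)
  have h := hook_eq _ hmem
  rw [addBox_rowLen hk, addBox_colLen hk, if_pos rfl, if_pos rfl, corner_colLen hk] at h
  omega

lemma hook_addBox_row {μ : YoungDiagram} {k j : ℕ} (hk : Addable μ k)
    (hj : j < μ.rowLen k) :
    hook (addBox μ (k, μ.rowLen k)) (k, j) = hook μ (k, j) + 1 := by
  have hmem : ((k, j) : ℕ × ℕ) ∈ μ := YoungDiagram.mem_iff_lt_rowLen.mpr hj
  have hmem' : ((k, j) : ℕ × ℕ) ∈ addBox μ (k, μ.rowLen k) :=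
    (mem_addBox_iff hk).mpr (Or.inr hmem)
  have h1 := hook_eq _ hmem
  have h2 := hook_eq _ hmem'
  have h3 : k < μ.colLen j := YoungDiagram.mem_iff_lt_colLen.mp hmem
  rw [addBox_rowLen hk, addBox_colLen hk, if_pos rfl, if_neg (by omega)] at h2
  omega

lemma hook_addBox_col {μ : YoungDiagram} {k i : ℕ} (hk : Addable μ k) (hkn : k ≤ μ.card)
    (hi : i < k) :
    hook (addBox μ (k, μ.rowLen k)) (i, μ.rowLen k) = hook μ (i, μ.rowLen k) + 1 := by
  have hk0 : k ≠ 0 := by omega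
  have hlt : μ.rowLen k < μ.rowLen i := by
    rcases hk with h | h
    · omega
    · exact lt_of_lt_of_le h (μ.rowLen_anti _ _ (by omega))
  have hmem : ((i, μ.rowLen k) : ℕ × ℕ) ∈ μ := YoungDiagram.mem_iff_lt_rowLen.mpr hlt
  have hmem' : ((i, μ.rowLen k) : ℕ × ℕ) ∈ addBox μ (k, μ.rowLen k) :=
    (mem_addBox_iff hk).mpr (Or.inr hmem)
  have h1 := hook_eq _ hmem
  have h2 := hook_eq _ hmem'
  have h3 : i < μ.colLen (μ.rowLen k) := YoungDiagram.mem_iff_lt_colLen.mp hmem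
  rw [addBox_rowLen hk, addBox_colLen hk, if_neg (by omega), if_pos rfl] at h2
  omega

lemma hook_addBox_other {μ : YoungDiagram} {k : ℕ} (hk : Addable μ k) {x : ℕ × ℕ}
    (hx : x ∈ μ) (h1 : x.1 ≠ k) (h2 : x.2 ≠ μ.rowLen k) :
    hook (addBox μ (k, μ.rowLen k)) x = hook μ x := by
  obtain ⟨i, j⟩ := x
  simp only at h1 h2
  have hmem' : ((i, j) : ℕ × ℕ) ∈ addBox μ (k, μ.rowLen k) :=
    (mem_addBox_iff hk).mpr (Or.inr hx)
  have e1 := hook_eq _ hx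
  have e2 := hook_eq _ hmem'
  rw [addBox_rowLen hk, addBox_colLen hk, if_neg h1, if_neg h2] at e2
  have h3 : j < μ.rowLen i := YoungDiagram.mem_iff_lt_rowLen.mp hx
  have h4 : i < μ.colLen j := YoungDiagram.mem_iff_lt_colLen.mp hx
  omega

/-- The hook product ratio: `H μ⁺ · e_k = H μ`. -/
lemma H_addBox_mul {μ : YoungDiagram} {k : ℕ} (hk : Addable μ k) (hkn : k ≤ μ.card) :
    H (addBox μ (k, μ.rowLen k))
      * (((aa μ k : ℚ) + 1)⁻¹ * ∏ j ∈ (Finset.range (μ.card + 1)).erase k,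
          (((aa μ j : ℚ) - (aa μ k : ℚ) - 1) * ((aa μ j : ℚ) - (aa μ k : ℚ))⁻¹))
      = H μ := by
  classical
  -- H of the augmented diagram
  have hHplus : H (addBox μ (k, μ.rowLen k))
      = ∏ x ∈ μ.cells, (hook (addBox μ (k, μ.rowLen k)) x : ℚ) := by
    rw [H, addBox_cells hk, Finset.prod_insert
      (by rw [YoungDiagram.mem_cells]; exact addable_not_mem k), hook_addBox_corner hk]
    simp
  have hsplitplus : ∏ x ∈ μ.cells, (hook (addBox μ (k, μ.rowLen k)) x : ℚ)
      = (∏ x ∈ μ.cells.filter (fun x => x.1 = k ∨ x.2 = μ.rowLen k), ((hook μ x : ℚ) + 1))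
        * ∏ x ∈ μ.cells.filter (fun x => ¬ (x.1 = k ∨ x.2 = μ.rowLen k)),
            (hook μ x : ℚ) := by
    rw [← Finset.prod_filter_mul_prod_filter_not μ.cells
      (fun x => x.1 = k ∨ x.2 = μ.rowLen k)]
    congr 1
    · refine Finset.prod_congr rfl fun x hx => ?_
      obtain ⟨i, j⟩ := x
      rw [Finset.mem_filter, YoungDiagram.mem_cells] at hx
      obtain ⟨hxm, hxp⟩ := hx
      have hxp' : i = k ∨ j = μ.rowLen k := hxp
      rcases hxp' with rfl | rfl
      · have hj : j < μ.rowLen i := YoungDiagram.mem_iff_lt_rowLen.mp hxm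
        rw [hook_addBox_row hk hj]
        push_cast; ring
      · have hi : i < k := by
          have := YoungDiagram.mem_iff_lt_colLen.mp hxm
          rw [corner_colLen hk] at this
          exact this
        rw [hook_addBox_col hk hkn hi]
        push_cast; ring
    · refine Finset.prod_congr rfl fun x hx => ?_
      rw [Finset.mem_filter, YoungDiagram.mem_cells] at hx
      obtain ⟨hxm, hxp⟩ := hx
      push_neg at hxp
      rw [hook_addBox_other hk hxm hxp.1 hxp.2]
  have hfor : μ.cells.filter (fun x => x.1 = k ∨ x.2 = μ.rowLen k)
      = μ.cells.filter (fun x => x.1 = k) ∪ μ.cells.filter (fun x => x.2 = μ.rowLen k) :=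
    Finset.filter_or _ _ _
  have hdisjrc : Disjoint (μ.cells.filter (fun x => x.1 = k))
      (μ.cells.filter (fun x => x.2 = μ.rowLen k)) := by
    rw [Finset.disjoint_left]
    rintro x hx1 hx2
    rw [Finset.mem_filter, YoungDiagram.mem_cells] at hx1 hx2
    have hxc : x = (k, μ.rowLen k) := Prod.ext hx1.2 hx2.2
    rw [hxc] at hx1
    exact addable_not_mem k hx1.1
  have hrowset : μ.cells.filter (fun x => x.1 = k) = {k} ×ˢ Finset.range (μ.rowLen k) := by
    ext x
    obtain ⟨i, j⟩ := x
    simp only [Finset.mem_filter, Finset.mem_product, Finset.mem_singleton, Finset.mem_range,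
      YoungDiagram.mem_cells]
    rw [YoungDiagram.mem_iff_lt_rowLen]
    constructor
    · rintro ⟨hm, rfl⟩; exact ⟨rfl, hm⟩
    · rintro ⟨rfl, hm⟩; exact ⟨hm, rfl⟩
  have hcolset : μ.cells.filter (fun x => x.2 = μ.rowLen k)
      = Finset.range k ×ˢ {μ.rowLen k} := by
    ext x
    obtain ⟨i, j⟩ := x
    simp only [Finset.mem_filter, Finset.mem_product, Finset.mem_singleton, Finset.mem_range,
      YoungDiagram.mem_cells]
    rw [YoungDiagram.mem_iff_lt_colLen]
    constructor
    · rintro ⟨hm, rfl⟩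
      rw [corner_colLen hk] at hm
      exact ⟨hm, rfl⟩
    · rintro ⟨hm, rfl⟩
      rw [corner_colLen hk]
      exact ⟨hm, rfl⟩
  have hprow : ∀ F : ℕ × ℕ → ℚ, ∏ x ∈ ({k} ×ˢ Finset.range (μ.rowLen k)), F x
      = ∏ j ∈ Finset.range (μ.rowLen k), F (k, j) := by
    intro F; rw [Finset.prod_product]; simp
  have hpcol : ∀ F : ℕ × ℕ → ℚ, ∏ x ∈ (Finset.range k ×ˢ ({μ.rowLen k} : Finset ℕ)), F x
      = ∏ i ∈ Finset.range k, F (i, μ.rowLen k) := by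
    intro F; rw [Finset.prod_product]; simp
  have hHplus2 : H (addBox μ (k, μ.rowLen k))
      = (∏ j ∈ Finset.range (μ.rowLen k), ((hook μ (k, j) : ℚ) + 1))
        * (∏ i ∈ Finset.range k, ((hook μ (i, μ.rowLen k) : ℚ) + 1))
        * ∏ x ∈ μ.cells.filter (fun x => ¬ (x.1 = k ∨ x.2 = μ.rowLen k)),
            (hook μ x : ℚ) := by
    rw [hHplus, hsplitplus, hfor, Finset.prod_union hdisjrc, hrowset, hcolset,
      hprow (fun x => (hook μ x : ℚ) + 1), hpcol (fun x => (hook μ x : ℚ) + 1)]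
  have hHmu : H μ
      = (∏ j ∈ Finset.range (μ.rowLen k), (hook μ (k, j) : ℚ))
        * (∏ i ∈ Finset.range k, (hook μ (i, μ.rowLen k) : ℚ))
        * ∏ x ∈ μ.cells.filter (fun x => ¬ (x.1 = k ∨ x.2 = μ.rowLen k)),
            (hook μ x : ℚ) := by
    rw [H, ← Finset.prod_filter_mul_prod_filter_not μ.cells
      (fun x => x.1 = k ∨ x.2 = μ.rowLen k), hfor, Finset.prod_union hdisjrc,
      hrowset, hcolset, hprow (fun x => (hook μ x : ℚ)), hpcol (fun x => (hook μ x : ℚ))]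
  -- the two instances of the row-hook bijection
  have hE0 := row_hook_prod μ hkn (fun h => (h : ℚ))
  have hE1 := row_hook_prod μ hkn (fun h => (h : ℚ) + 1)
  have hE : (∏ j ∈ Finset.range (μ.rowLen k), ((hook μ (k, j) : ℚ) + 1))
        * (∏ i ∈ Finset.Ico (k + 1) (μ.card + 1), (((aa μ k - aa μ i : ℕ) : ℚ) + 1))
      = ((aa μ k : ℚ) + 1) *
        ((∏ j ∈ Finset.range (μ.rowLen k), (hook μ (k, j) : ℚ))
          * (∏ i ∈ Finset.Ico (k + 1) (μ.card + 1), ((aa μ k - aa μ i : ℕ) : ℚ))) := by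
    rw [hE1, hE0, icc_shift]
  -- the e-factor
  have herase : (Finset.range (μ.card + 1)).erase k
      = Finset.range k ∪ Finset.Ico (k + 1) (μ.card + 1) := by
    ext x
    simp only [Finset.mem_erase, Finset.mem_range, Finset.mem_union, Finset.mem_Ico]
    omega
  have hdisj2 : Disjoint (Finset.range k) (Finset.Ico (k + 1) (μ.card + 1)) := by
    rw [Finset.disjoint_left]
    intro x hx1 hx2
    rw [Finset.mem_range] at hx1
    rw [Finset.mem_Ico] at hx2
    omega
  have hcolval : ∀ i ∈ Finset.range k,
      ((aa μ i : ℚ) - (aa μ k : ℚ) - 1) * ((aa μ i : ℚ) - (aa μ k : ℚ))⁻¹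
        = (hook μ (i, μ.rowLen k) : ℚ) * ((hook μ (i, μ.rowLen k) : ℚ) + 1)⁻¹ := by
    intro i hi
    rw [Finset.mem_range] at hi
    have h1 := col_hook_val hk hkn hi
    have hcast : (hook μ (i, μ.rowLen k) : ℚ) + 1 + (aa μ k : ℚ) = (aa μ i : ℚ) := by
      exact_mod_cast h1
    rw [show (aa μ i : ℚ) - (aa μ k : ℚ) - 1 = (hook μ (i, μ.rowLen k) : ℚ) by linarith,
      show (aa μ i : ℚ) - (aa μ k : ℚ) = (hook μ (i, μ.rowLen k) : ℚ) + 1 by linarith]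
  have hicoval : ∀ i ∈ Finset.Ico (k + 1) (μ.card + 1),
      ((aa μ i : ℚ) - (aa μ k : ℚ) - 1) * ((aa μ i : ℚ) - (aa μ k : ℚ))⁻¹
        = (((aa μ k - aa μ i : ℕ) : ℚ) + 1) * ((aa μ k - aa μ i : ℕ) : ℚ)⁻¹ := by
    intro i hi
    rw [Finset.mem_Ico] at hi
    have hlt := aa_anti μ (show k < i by omega) (by omega)
    have hcast : ((aa μ k - aa μ i : ℕ) : ℚ) = (aa μ k : ℚ) - (aa μ i : ℚ) :=
      Nat.cast_sub (le_of_lt hlt)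
    rw [hcast, show (aa μ i : ℚ) - (aa μ k : ℚ) - 1
        = -(((aa μ k : ℚ) - (aa μ i : ℚ)) + 1) by ring,
      show (aa μ i : ℚ) - (aa μ k : ℚ) = -((aa μ k : ℚ) - (aa μ i : ℚ)) by ring, inv_neg]
    ring
  have hefact : ∏ j ∈ (Finset.range (μ.card + 1)).erase k,
      (((aa μ j : ℚ) - (aa μ k : ℚ) - 1) * ((aa μ j : ℚ) - (aa μ k : ℚ))⁻¹)
      = ((∏ i ∈ Finset.range k, (hook μ (i, μ.rowLen k) : ℚ))
          * (∏ i ∈ Finset.range k, ((hook μ (i, μ.rowLen k) : ℚ) + 1))⁻¹)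
        * ((∏ i ∈ Finset.Ico (k + 1) (μ.card + 1), (((aa μ k - aa μ i : ℕ) : ℚ) + 1))
          * (∏ i ∈ Finset.Ico (k + 1) (μ.card + 1), ((aa μ k - aa μ i : ℕ) : ℚ))⁻¹) := by
    rw [herase, Finset.prod_union hdisj2, Finset.prod_congr rfl hcolval,
      Finset.prod_congr rfl hicoval, Finset.prod_mul_distrib, Finset.prod_mul_distrib,
      Finset.prod_inv_distrib, Finset.prod_inv_distrib]
  -- nonvanishing
  have hC1ne : (∏ i ∈ Finset.range k, ((hook μ (i, μ.rowLen k) : ℚ) + 1)) ≠ 0 := by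
    apply Finset.prod_ne_zero_iff.mpr
    intro i _
    positivity
  have hG0ne : (∏ i ∈ Finset.Ico (k + 1) (μ.card + 1), ((aa μ k - aa μ i : ℕ) : ℚ)) ≠ 0 := by
    apply Finset.prod_ne_zero_iff.mpr
    intro i hi
    rw [Finset.mem_Ico] at hi
    have hlt := aa_anti μ (show k < i by omega) (by omega)
    exact Nat.cast_ne_zero.mpr (by omega)
  have hbkne : ((aa μ k : ℚ) + 1) ≠ 0 := by positivity
  rw [hefact, hHplus2, hHmu]
  set R1 := ∏ j ∈ Finset.range (μ.rowLen k), ((hook μ (k, j) : ℚ) + 1) with hR1A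
  set R0 := ∏ j ∈ Finset.range (μ.rowLen k), (hook μ (k, j) : ℚ) with hR0A
  set C1 := ∏ i ∈ Finset.range k, ((hook μ (i, μ.rowLen k) : ℚ) + 1) with hC1A
  set C0 := ∏ i ∈ Finset.range k, (hook μ (i, μ.rowLen k) : ℚ) with hC0A
  set G1 := ∏ i ∈ Finset.Ico (k + 1) (μ.card + 1), (((aa μ k - aa μ i : ℕ) : ℚ) + 1) with hG1A
  set G0 := ∏ i ∈ Finset.Ico (k + 1) (μ.card + 1), ((aa μ k - aa μ i : ℕ) : ℚ) with hG0A
  set Rest := ∏ x ∈ μ.cells.filter (fun x => ¬ (x.1 = k ∨ x.2 = μ.rowLen k)),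
    (hook μ x : ℚ) with hRestA
  set ak := (aa μ k : ℚ) with hakA
  field_simp
  linear_combination (Rest * C0) * hE


-- φ computations
lemma phi_addBox {μ : YoungDiagram} {k : ℕ} (hk : Addable μ k) (hkn : k ≤ μ.card) (z : ℚ) :
    phiEval (addBox μ (k, μ.rowLen k)) z
      = (z + (aa μ k : ℚ) + 1)
        * ∏ j ∈ (Finset.range (μ.card + 1)).erase k, (z + (aa μ j : ℚ)) := by
  rw [phiEval, addBox_card hk]
  rw [← Finset.mul_prod_erase _ _ (Finset.mem_range.mpr (show k < μ.card + 1 by omega))]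
  congr 1
  · rw [addBox_rowLen hk, if_pos rfl]
    have h1 : aa μ k = μ.rowLen k + (μ.card - k) := rfl
    rw [h1]
    push_cast [Nat.cast_sub hkn]
    ring
  · refine Finset.prod_congr rfl fun j hj => ?_
    obtain ⟨hjk, hjr⟩ := Finset.mem_erase.mp hj
    have hjn : j ≤ μ.card := by have := Finset.mem_range.mp hjr; omega
    rw [addBox_rowLen hk, if_neg hjk]
    have h1 : aa μ j = μ.rowLen j + (μ.card - j) := rfl
    rw [h1]
    push_cast [Nat.cast_sub hjn]
    ring

lemma phi_self (μ : YoungDiagram) (z : ℚ) :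
    phiEval μ z = ∏ i ∈ Finset.range μ.card, (z - 1 + (aa μ i : ℚ)) := by
  rw [phiEval]
  refine Finset.prod_congr rfl fun i hi => ?_
  have hin : i ≤ μ.card := by have := Finset.mem_range.mp hi; omega
  have h1 : aa μ i = μ.rowLen i + (μ.card - i) := rfl
  rw [h1]
  push_cast [Nat.cast_sub hin]
  ring

lemma phi_shift (μ : YoungDiagram) (z : ℚ) :
    z * phiEval μ (z + 1) = ∏ i ∈ Finset.range (μ.card + 1), (z + (aa μ i : ℚ)) := by
  rw [Finset.prod_range_succ, phiEval]
  have h2 : (aa μ μ.card : ℚ) = 0 := by rw [aa_last]; simp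
  rw [h2, add_zero]
  have h3 : ∏ i ∈ Finset.range μ.card, (z + 1 + (μ.card : ℚ) + (μ.rowLen i : ℚ) - i - 1)
      = ∏ i ∈ Finset.range μ.card, (z + (aa μ i : ℚ)) := by
    refine Finset.prod_congr rfl fun i hi => ?_
    have hin : i ≤ μ.card := by have := Finset.mem_range.mp hi; omega
    have h1 : aa μ i = μ.rowLen i + (μ.card - i) := rfl
    rw [h1]
    push_cast [Nat.cast_sub hin]
    ring
  rw [h3]
  ring

lemma e_vanish {μ : YoungDiagram} {k : ℕ} (hkn : k < μ.card + 1) (hnk : ¬ Addable μ k) :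
    e (μ.card + 1) (fun i => (aa μ i : ℚ)) k = 0 := by
  rw [Addable, not_or, not_lt] at hnk
  obtain ⟨hk0, hle⟩ := hnk
  have hge : μ.rowLen k ≤ μ.rowLen (k - 1) := μ.rowLen_anti _ _ (by omega)
  have heq : μ.rowLen (k - 1) = μ.rowLen k := le_antisymm hle hge
  have hb : aa μ (k - 1) = aa μ k + 1 := by
    unfold aa
    rw [heq]
    omega
  rw [e]
  have hmem : k - 1 ∈ (Finset.range (μ.card + 1)).erase k := by
    rw [Finset.mem_erase, Finset.mem_range]
    omega
  rw [Finset.prod_eq_zero hmem (by rw [hb]; push_cast; ring), mul_zero]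

lemma H_ne_zero (μ : YoungDiagram) : H μ ≠ 0 := by
  rw [H]
  apply Finset.prod_ne_zero_iff.mpr
  intro c hc
  have := hook_pos μ ((YoungDiagram.mem_cells _).mp hc)
  exact Nat.cast_ne_zero.mpr (by omega)

/-- `D(φ_λ(z)/H_λ) = z·φ_λ(z+1)/H_λ`, i.e.
`Σ_{λ⁺} φ_{λ⁺}(z)/H_{λ⁺} − φ_λ(z)/H_λ = z·φ_λ(z+1)/H_λ`, as an identity of
polynomials in `z` (equivalently, for every `z : ℚ`). -/
theorem D_phi (l : YoungDiagram) (z : ℚ) :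
    D (fun t => phiEval t z / H t) l = z * phiEval l (z + 1) / H l := by
  classical
  have haa_anti : ∀ {i j : ℕ}, i < j → j < l.card + 1
      → ((aa l j : ℚ)) < ((aa l i : ℚ)) := by
    intro i j hij hj
    exact_mod_cast aa_anti l hij (by omega)
  -- the main sum
  have key : ∑ c ∈ addables l, phiEval (addBox l c) z / H (addBox l c)
      = (∏ i ∈ Finset.range l.card, (z - 1 + (aa l i : ℚ))
         + ∏ i ∈ Finset.range (l.card + 1), (z + (aa l i : ℚ))) / H l := by
    rw [addables_eq]
    rw [Finset.sum_image (by intro x _ y _ hxy; exact congrArg Prod.fst hxy)]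
    have hterm : ∀ k ∈ (Finset.range (l.card + 1)).filter (fun k => Addable l k),
        phiEval (addBox l (k, l.rowLen k)) z / H (addBox l (k, l.rowLen k))
        = e (l.card + 1) (fun i => (aa l i : ℚ)) k
            * ((z + (aa l k : ℚ) + 1)
              * ∏ j ∈ (Finset.range (l.card + 1)).erase k, (z + (aa l j : ℚ))) / H l := by
      intro k hks
      rw [Finset.mem_filter, Finset.mem_range] at hks
      obtain ⟨hkn, hadd⟩ := hks
      have hkn' : k ≤ l.card := by omega
      have hHe : H (addBox l (k, l.rowLen k)) * e (l.card + 1) (fun i => (aa l i : ℚ)) k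
          = H l := by
        have := H_addBox_mul hadd hkn'
        rw [e]
        exact this
      have hene : e (l.card + 1) (fun i => (aa l i : ℚ)) k ≠ 0 := by
        intro h0
        rw [h0, mul_zero] at hHe
        exact H_ne_zero l hHe.symm
      rw [phi_addBox hadd hkn' z, ← hHe]
      rw [show H (addBox l (k, l.rowLen k)) * e (l.card + 1) (fun i => (aa l i : ℚ)) k
        = e (l.card + 1) (fun i => (aa l i : ℚ)) k * H (addBox l (k, l.rowLen k)) by ring]
      rw [mul_div_mul_left _ _ hene]
    rw [Finset.sum_congr rfl hterm]
    have hfill : ∑ k ∈ (Finset.range (l.card + 1)).filter (fun k => Addable l k),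
        e (l.card + 1) (fun i => (aa l i : ℚ)) k
          * ((z + (aa l k : ℚ) + 1)
            * ∏ j ∈ (Finset.range (l.card + 1)).erase k, (z + (aa l j : ℚ))) / H l
        = ∑ k ∈ Finset.range (l.card + 1),
        e (l.card + 1) (fun i => (aa l i : ℚ)) k
          * ((z + (aa l k : ℚ) + 1)
            * ∏ j ∈ (Finset.range (l.card + 1)).erase k, (z + (aa l j : ℚ))) / H l := by
      apply Finset.sum_subset (Finset.filter_subset _ _)
      intro k hkr hknot
      rw [Finset.mem_filter] at hknot
      have hnadd : ¬ Addable l k := fun hc => hknot ⟨hkr, hc⟩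
      rw [e_vanish (Finset.mem_range.mp hkr) hnadd, zero_mul, zero_div]
    rw [hfill, ← Finset.sum_div]
    congr 1
    have halg := alg_main (l.card + 1) (by omega) (fun i => (aa l i : ℚ))
      haa_anti (by simp only [Nat.add_sub_cancel]; exact_mod_cast congrArg (fun t : ℕ => (t : ℚ)) (aa_last l)) z
    simp only [Nat.add_sub_cancel] at halg
    exact halg
  have hD : D (fun t => phiEval t z / H t) l
      = (∑ c ∈ addables l, phiEval (addBox l c) z / H (addBox l c)) - phiEval l z / H l := rfl
  rw [hD, key, phi_self l z]
  rw [show ((∏ i ∈ Finset.range l.card, (z - 1 + (aa l i : ℚ)))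
      + ∏ i ∈ Finset.range (l.card + 1), (z + (aa l i : ℚ))) / H l
      - (∏ i ∈ Finset.range l.card, (z - 1 + (aa l i : ℚ))) / H l
      = (∏ i ∈ Finset.range (l.card + 1), (z + (aa l i : ℚ))) / H l from by ring]
  rw [phi_shift l z]

end HookDiff
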